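/- A strict finite normal-form game admits an ordinal potential if and only if its preference graph is acyclic (contains no directed cycle). -/
import Mathlib


/-- Two distinct profiles are `i`-comparable if they differ only in the strategy of player `i`. -/
def IComp {N : ℕ} {S : Fin N → Type*} (i : Fin N) (p q : ∀ j, S j) : Prop :=
  p ≠ q ∧ ∀ j, j ≠ i → p j = q j

/-- A game is strict if `i`-comparable profiles never give player `i` equal payoff. -/
def StrictGame {N : ℕ} {S : Fin N → Type*} (u : Fin N → (∀ j, S j) → ℝ) : Prop :=
  ∀ i p q, IComp i p q → u i p ≠ u i q

/-- Arc of the preference graph. -/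
def PrefArc {N : ℕ} {S : Fin N → Type*} (u : Fin N → (∀ j, S j) → ℝ)
    (p q : ∀ j, S j) : Prop :=
  ∃ i, IComp i p q ∧ u i p < u i q

/-- The relation `A` has a directed cycle: a sequence of `n + 2 ≥ 2` distinct nodes,
each with an arc to the next, cyclically. -/
def HasCycle {α : Type*} (A : α → α → Prop) : Prop :=
  ∃ (n : ℕ) (f : Fin (n + 2) → α), Function.Injective f ∧ ∀ k, A (f k) (f (k + 1))

/-- An ordinal potential for a game. -/
def IsOrdinalPotential {N : ℕ} {S : Fin N → Type*} (u : Fin N → (∀ j, S j) → ℝ)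
    (P : (∀ j, S j) → ℝ) : Prop :=
  ∀ i p q, IComp i p q → (u i p < u i q ↔ P p < P q)

/-- From a transitive-closure step we can extract a ℕ-indexed walk. -/
lemma walk_of_transGen {α : Type*} {A : α → α → Prop} {p q : α}
    (h : Relation.TransGen A p q) :
    ∃ (m : ℕ) (w : ℕ → α), 1 ≤ m ∧ w 0 = p ∧ w m = q ∧ ∀ k < m, A (w k) (w (k + 1)) := by
  induction h with
  | @single b hab =>
    refine ⟨1, fun k => if k = 0 then p else b, le_refl 1, by simp, by simp, ?_⟩
    intro k hk
    interval_cases k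
    simpa using hab
  | @tail b c hpb hbc ih =>
    obtain ⟨m, w, hm, h0, hmq, hstep⟩ := ih
    refine ⟨m + 1, fun k => if k < m + 1 then w k else c, by omega, ?_, ?_, ?_⟩
    · simp only [if_pos (Nat.succ_pos m), h0]
    · simp only [lt_irrefl, if_neg]
      simp
    · intro k hk
      by_cases hkm : k < m
      · simp only [if_pos (by omega : k < m + 1), if_pos (by omega : k + 1 < m + 1)]
        exact hstep k hkm
      · have hk' : k = m := by omega
        rw [hk']
        simp only [if_pos (by omega : m < m + 1), if_neg (by omega : ¬ m + 1 < m + 1), hmq]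
        exact hbc

/-- A closed walk in an irreflexive relation yields a (simple) directed cycle. -/
lemma cycle_of_loop {α : Type*} {A : α → α → Prop} (hirr : ∀ x, ¬ A x x) {p : α}
    (h : Relation.TransGen A p p) : HasCycle A := by
  classical
  obtain ⟨m, w, hm, h0, hmp, hstep⟩ := walk_of_transGen h
  have hex : ∃ d, ∃ a, 1 ≤ d ∧ a + d ≤ m ∧ w a = w (a + d) :=
    ⟨m, 0, hm, by omega, by rw [h0, Nat.zero_add, hmp]⟩
  obtain ⟨a, hd1, hdm, hw⟩ := Nat.find_spec hex
  set d := Nat.find hex with hd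
  have hmin : ∀ d' < d, ¬ ∃ a, 1 ≤ d' ∧ a + d' ≤ m ∧ w a = w (a + d') :=
    fun d' h' => Nat.find_min hex h'
  have hd2 : 2 ≤ d := by
    by_contra hlt
    have hd1' : d = 1 := by omega
    have := hstep a (by omega)
    rw [hd1'] at hw
    rw [← hw] at this
    exact hirr _ this
  refine ⟨d - 2, fun k => w (a + k.val), ?_, ?_⟩
  · intro i j hij
    by_contra hne
    rcases Nat.lt_or_ge i.val j.val with hlt | hge
    · exact hmin (j.val - i.val) (by omega)
        ⟨a + i.val, by omega, by have := j.isLt; omega,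
          by rw [show a + i.val + (j.val - i.val) = a + j.val by omega]; exact hij⟩
    · have hlt : j.val < i.val := by
        rcases Nat.lt_or_ge j.val i.val with h' | h'
        · exact h'
        · exact absurd (Fin.ext (by omega)) hne
      exact hmin (i.val - j.val) (by omega)
        ⟨a + j.val, by omega, by have := i.isLt; omega,
          by rw [show a + j.val + (i.val - j.val) = a + i.val by omega]; exact hij.symm⟩
  · intro k
    have hk2 : k.val < d - 2 + 2 := k.isLt
    have hval : (k + 1 : Fin (d - 2 + 2)).val = (k.val + 1) % (d - 2 + 2) := by
      simp [Fin.add_def]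
    by_cases hlast : k.val = d - 2 + 1
    · have h1 : (k + 1 : Fin (d - 2 + 2)).val = 0 := by
        rw [hval, hlast]
        simp [Nat.mod_self]
      show A (w (a + k.val)) (w (a + (k + 1 : Fin (d - 2 + 2)).val))
      rw [h1]
      show A (w (a + k.val)) (w a)
      rw [hw, hlast]
      have := hstep (a + (d - 2 + 1)) (by omega)
      rwa [show a + (d - 2 + 1) + 1 = a + d by omega] at this
    · have h1 : (k + 1 : Fin (d - 2 + 2)).val = k.val + 1 := by
        rw [hval, Nat.mod_eq_of_lt (by omega)]
      show A (w (a + k.val)) (w (a + (k + 1 : Fin (d - 2 + 2)).val))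
      rw [h1, show a + (k.val + 1) = a + k.val + 1 by omega]
      exact hstep (a + k.val) (by omega)

/-- A strict finite game admits an ordinal potential iff its preference graph is acyclic. -/
theorem ordinal_potential_iff_acyclic {N : ℕ} {S : Fin N → Type*}
    [∀ i, Fintype (S i)] [∀ i, Nonempty (S i)]
    (u : Fin N → (∀ j, S j) → ℝ) (hu : StrictGame u) :
    (∃ P : (∀ j, S j) → ℝ, IsOrdinalPotential u P) ↔ ¬ HasCycle (PrefArc u) := by
  classical
  constructor
  · rintro ⟨P, hP⟩ ⟨n, f, hinj, harc⟩
    have hPlt : ∀ k : Fin (n + 2), P (f k) < P (f (k + 1)) := by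
      intro k
      obtain ⟨i, hic, hui⟩ := harc k
      exact (hP i _ _ hic).mp hui
    have hchain : ∀ j : ℕ, (hj : j < n + 2) → P (f 0) ≤ P (f ⟨j, hj⟩) := by
      intro j
      induction j with
      | zero => intro hj; exact le_of_eq (by congr 1)
      | succ j ih =>
        intro hj
        have hj' : j < n + 2 := by omega
        have h1 : (⟨j, hj'⟩ : Fin (n + 2)) + 1 = ⟨j + 1, hj⟩ := by
          apply Fin.ext
          simp [Fin.add_def, Nat.mod_eq_of_lt hj]
        have := (ih hj').trans_lt (hPlt ⟨j, hj'⟩)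
        rw [h1] at this
        exact this.le
    have hlast := hPlt ⟨n + 1, by omega⟩
    have hwrap : (⟨n + 1, by omega⟩ : Fin (n + 2)) + 1 = 0 := by
      apply Fin.ext
      simp [Fin.add_def]
    rw [hwrap] at hlast
    have := hchain (n + 1) (by omega)
    exact absurd hlast (not_lt.mpr this)
  · intro hnc
    set A := PrefArc u with hA
    have hirr : ∀ x, ¬ A x x := by
      rintro x ⟨i, ⟨hne, _⟩, _⟩
      exact hne rfl
    have hirrT : ∀ x, ¬ Relation.TransGen A x x := fun x hx => hnc (cycle_of_loop hirr hx)
    set P : (∀ j, S j) → ℝ :=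
      fun p => ((Finset.univ.filter (fun x => Relation.TransGen A x p)).card : ℝ) with hPdef
    have hmono : ∀ p q, Relation.TransGen A p q → P p < P q := by
      intro p q hpq
      have hsub : (Finset.univ.filter (fun x => Relation.TransGen A x p)) ⊂
          (Finset.univ.filter (fun x => Relation.TransGen A x q)) := by
        constructor
        · intro x hx
          simp only [Finset.mem_filter, Finset.mem_univ, true_and] at hx ⊢
          exact hx.trans hpq
        · intro hcon
          have hp : p ∈ Finset.univ.filter (fun x => Relation.TransGen A x q) := by
            simp only [Finset.mem_filter, Finset.mem_univ, true_and]
            exact hpq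
          have := hcon hp
          simp only [Finset.mem_filter, Finset.mem_univ, true_and] at this
          exact hirrT p this
      have := Finset.card_lt_card hsub
      simp only [hPdef]
      exact_mod_cast this
    refine ⟨P, ?_⟩
    intro i p q hic
    constructor
    · intro hlt
      exact hmono p q (Relation.TransGen.single ⟨i, hic, hlt⟩)
    · intro hlt
      by_contra hnlt
      have hqp : u i q < u i p := lt_of_le_of_ne (not_lt.mp hnlt) (hu i q p ?_)
      · have := hmono q p (Relation.TransGen.single ⟨i, ?_, hqp⟩)
        · exact absurd hlt (not_lt.mpr this.le)
        · exact ⟨hic.1.symm, fun j hj => (hic.2 j hj).symm⟩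
      · exact ⟨hic.1.symm, fun j hj => (hic.2 j hj).symm⟩
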